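/- Let G be a group such that for every finite subset H of G there exist a finite group D and a function d : D → G with H ⊆ d(D) and d(x'*y') = d(x')*d(y') for all x', y' ∈ D with d(x') ∈ H and d(y') ∈ H (i.e., G is an LWF group). Then G is an LEF group: for every finite subset H of G there exist a finite group F and an injective function f : H → F such that for all x, y ∈ H with x*y ∈ H, f(x*y) = f(x)*f(y). -/

import Mathlib

open scoped Pointwise


/-- A group `G` is LWF (locally wrapped by the class of finite groups) if for every finite
subset `H` of `G` there exist a finite group `D` and a function `d : D → G` such that
`H ⊆ d(D)` and `d (x' * y') = d x' * d y'` whenever `d x', d y' ∈ H`. -/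
def Group.IsLWF (G : Type*) [Group G] : Prop :=
  ∀ H : Finset G, ∃ (D : Type) (_ : Group D) (_ : Fintype D) (d : D → G),
    (↑H ⊆ Set.range d) ∧
      ∀ x' y' : D, d x' ∈ H → d y' ∈ H → d (x' * y') = d x' * d y'

/-- A group `G` is LEF (locally embeddable into the class of finite groups) if for every
finite subset `H` of `G` there exist a finite group `F` and a function `f : G → F`
injective on `H` such that `f (x * y) = f x * f y` whenever `x, y, x * y ∈ H`. -/
def Group.IsLEF (G : Type*) [Group G] : Prop :=
  ∀ H : Finset G, ∃ (F : Type) (_ : Group F) (_ : Fintype F) (f : G → F),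
    Set.InjOn f ↑H ∧
      ∀ x ∈ H, ∀ y ∈ H, x * y ∈ H → f (x * y) = f x * f y

/-- Every LWF group is an LEF group. -/
theorem Group.isLEF_of_isLWF (G : Type*) [Group G] (hG : Group.IsLWF G) :
    Group.IsLEF G := by
  classical
  letI := Classical.decEq G
  intro H
  set J : Finset G := insert 1 (H ∪ H * H) with hJ
  set K : Finset G := J ∪ J.image (·⁻¹) with hKdef
  have hJK : J ⊆ K := Finset.subset_union_left
  have h1K : (1 : G) ∈ K := hJK (Finset.mem_insert_self _ _)
  have hHK : ∀ x ∈ H, x ∈ K := by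
    intro x hx
    exact hJK (Finset.mem_insert_of_mem (Finset.mem_union_left _ hx))
  have hHHK : ∀ x ∈ H, ∀ y ∈ H, x * y ∈ K := by
    intro x hx y hy
    refine hJK (Finset.mem_insert_of_mem (Finset.mem_union_right _ ?_))
    exact Finset.mul_mem_mul hx hy
  have hinvK : ∀ k ∈ K, k⁻¹ ∈ K := by
    intro k hk
    rcases Finset.mem_union.1 hk with h | h
    · exact Finset.mem_union_right _ (Finset.mem_image.2 ⟨k, h, rfl⟩)
    · rcases Finset.mem_image.1 h with ⟨a, ha, rfl⟩
      simpa using hJK ha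
  obtain ⟨D, _, _, d, hsub, hmul⟩ := hG K
  -- a choice of preimages
  have hchoice : ∀ g ∈ K, ∃ a : D, d a = g := by
    intro g hg
    exact hsub (by exact_mod_cast hg)
  set s : G → D := fun g =>
    if h : g ∈ K then (hchoice g h).choose else (hchoice 1 h1K).choose with hs
  have hsd : ∀ g ∈ K, d (s g) = g := by
    intro g hg
    simp only [hs, dif_pos hg]
    exact (hchoice g hg).choose_spec
  -- d of the identity
  have hd1 : d 1 = 1 := by
    set e : D := s 1 with he
    have hde : d e = 1 := hsd 1 h1K
    have hpow : ∀ n : ℕ, d (e ^ (n + 1)) = 1 := by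
      intro n
      induction n with
      | zero => simpa using hde
      | succ m ih =>
        have := hmul (e ^ (m + 1)) e (by rw [ih]; exact h1K) (by rw [hde]; exact h1K)
        rw [← pow_succ] at this
        rw [this, ih, hde, one_mul]
    have hfin : e ^ orderOf e = 1 := pow_orderOf_eq_one e
    have hpos : orderOf e ≠ 0 := (orderOf_pos e).ne'
    obtain ⟨m, hm⟩ := Nat.exists_eq_succ_of_ne_zero hpos
    have := hpow m
    rw [show m + 1 = orderOf e from hm.symm, hfin] at this
    exact this
  have hdpow : ∀ a : D, d a = 1 → ∀ n : ℕ, d (a ^ n) = 1 := by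
    intro a ha n
    induction n with
    | zero => simpa using hd1
    | succ m ih =>
      have := hmul (a ^ m) a (by rw [ih]; exact h1K) (by rw [ha]; exact h1K)
      rw [← pow_succ] at this
      rw [this, ih, ha, one_mul]
  -- the subgroup P = d⁻¹(1)
  set P : Subgroup D :=
    { carrier := {a : D | d a = 1}
      one_mem' := hd1
      mul_mem' := by
        intro a b (ha : d a = 1) (hb : d b = 1)
        have := hmul a b (by rw [ha]; exact h1K) (by rw [hb]; exact h1K)
        show d (a * b) = 1
        rw [this, ha, hb, one_mul]
      inv_mem' := by
        intro a (ha : d a = 1)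
        show d a⁻¹ = 1
        have hfin : a ^ orderOf a = 1 := pow_orderOf_eq_one a
        have hpos : 0 < orderOf a := orderOf_pos a
        have hinv : a⁻¹ = a ^ (orderOf a - 1) := by
          refine inv_eq_of_mul_eq_one_right ?_
          rw [← pow_succ', Nat.sub_add_cancel hpos]
          exact hfin
        rw [hinv]
        exact hdpow a ha _ } with hPdef
  have hmemP : ∀ a : D, a ∈ P ↔ d a = 1 := fun a => Iff.rfl
  -- multiplying by P fixes the fiber
  have hfibmulP : ∀ k ∈ K, ∀ u : D, d u = k → ∀ p ∈ P, d (u * p) = k ∧ d (p * u) = k := by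
    intro k hk u hu p hp
    rw [hmemP] at hp
    constructor
    · rw [hmul u p (by rw [hu]; exact hk) (by rw [hp]; exact h1K), hu, hp, mul_one]
    · rw [hmul p u (by rw [hp]; exact h1K) (by rw [hu]; exact hk), hu, hp, one_mul]
  -- key: two elements of the same fiber over K differ by P on either side
  have hfib : ∀ k ∈ K, ∀ u v : D, d u = k → d v = k → u⁻¹ * v ∈ P ∧ v * u⁻¹ ∈ P := by
    intro k hk u v hu hv
    have hkinv : k⁻¹ ∈ K := hinvK k hk
    set w : D := s k⁻¹ with hw
    have hdw : d w = k⁻¹ := hsd _ hkinv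
    have hwu : w * u ∈ P := by
      rw [hmemP, hmul w u (by rw [hdw]; exact hkinv) (by rw [hu]; exact hk), hdw, hu,
        inv_mul_cancel]
    have hwv : w * v ∈ P := by
      rw [hmemP, hmul w v (by rw [hdw]; exact hkinv) (by rw [hv]; exact hk), hdw, hv,
        inv_mul_cancel]
    have huw : u * w ∈ P := by
      rw [hmemP, hmul u w (by rw [hu]; exact hk) (by rw [hdw]; exact hkinv), hdw, hu,
        mul_inv_cancel]
    have hvw : v * w ∈ P := by
      rw [hmemP, hmul v w (by rw [hv]; exact hk) (by rw [hdw]; exact hkinv), hdw, hv,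
        mul_inv_cancel]
    constructor
    · have := mul_mem (inv_mem hwu) hwv
      simpa [mul_assoc] using this
    · have := mul_mem hvw (inv_mem huw)
      simpa [mul_assoc] using this
  -- preimages of K normalize P
  have hnorm : ∀ u : D, d u ∈ K → u ∈ Subgroup.normalizer (P : Set D) := by
    intro u hu
    rw [Subgroup.mem_normalizer_iff]
    intro p
    constructor
    · intro hp
      have h1 : d (u * p) = d u := (hfibmulP _ hu u rfl p hp).1
      exact (hfib _ hu u (u * p) rfl h1).2
    · intro hp
      have h1 : d ((u * p * u⁻¹) * u) = d u := by
        have := (hfibmulP _ hu u rfl _ hp).2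
        simpa [mul_assoc] using this
      have := (hfib _ hu u ((u * p * u⁻¹) * u) rfl h1).1
      simpa [mul_assoc] using this
  set D₁ : Subgroup D := Subgroup.closure (d ⁻¹' ↑K) with hD₁
  have hD₁norm : D₁ ≤ Subgroup.normalizer (P : Set D) := by
    rw [hD₁, Subgroup.closure_le]
    intro u hu
    exact hnorm u hu
  set N : Subgroup D₁ := P.subgroupOf D₁ with hN
  have hNnormal : N.Normal := by
    constructor
    intro n hn g
    rw [hN, Subgroup.mem_subgroupOf] at hn ⊢
    have hg : (g : D) ∈ Subgroup.normalizer (P : Set D) := hD₁norm g.2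
    rw [Subgroup.mem_normalizer_iff] at hg
    exact (hg n).1 hn
  letI := hNnormal
  have hfinD₁ : Finite D₁ := inferInstance
  have hfinQ : Finite (D₁ ⧸ N) := inferInstance
  letI : Fintype (D₁ ⧸ N) := Fintype.ofFinite _
  have hsmem : ∀ g : G, s g ∈ D₁ := by
    intro g
    refine Subgroup.subset_closure ?_
    show d (s g) ∈ (K : Set G)
    by_cases h : g ∈ K
    · rw [hsd g h]; exact_mod_cast h
    · simp only [hs, dif_neg h]
      rw [(hchoice 1 h1K).choose_spec]
      exact_mod_cast h1K
  refine ⟨D₁ ⧸ N, inferInstance, inferInstance,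
    fun g => QuotientGroup.mk (⟨s g, hsmem g⟩ : D₁), ?_, ?_⟩
  · intro x hx y hy hfxy
    rw [Finset.mem_coe] at hx hy
    rw [QuotientGroup.eq, hN, Subgroup.mem_subgroupOf] at hfxy
    have hP : (s x)⁻¹ * s y ∈ P := hfxy
    have hx' : d (s x) = x := hsd x (hHK x hx)
    have hy' : d (s y) = y := hsd y (hHK y hy)
    have : d (s x * ((s x)⁻¹ * s y)) = x := (hfibmulP x (hHK x hx) _ hx' _ hP).1
    rw [mul_inv_cancel_left, hy'] at this
    exact this.symm
  · intro x hx y hy hxy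
    have hx' : d (s x) = x := hsd x (hHK x hx)
    have hy' : d (s y) = y := hsd y (hHK y hy)
    have hxyK : x * y ∈ K := hHHK x hx y hy
    have hdxy : d (s x * s y) = x * y := by
      rw [hmul (s x) (s y) (by rw [hx']; exact hHK x hx) (by rw [hy']; exact hHK y hy),
        hx', hy']
    have hdxy2 : d (s (x * y)) = x * y := hsd _ hxyK
    have hgoal : (s (x * y))⁻¹ * (s x * s y) ∈ P :=
      (hfib (x * y) hxyK _ _ hdxy2 hdxy).1
    show QuotientGroup.mk _ = QuotientGroup.mk _ * QuotientGroup.mk _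
    rw [← QuotientGroup.mk_mul, QuotientGroup.eq, hN, Subgroup.mem_subgroupOf]
    simpa using hgoal
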